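/- The complete planar 3-tree T_d has outerplane splitting number at least (2 n_d − 8)/3, where n_d = |V(T_d)| = (3^{d+1}+5)/2. -/

import Mathlib

open Classical

/-- An abstract model of a plane (planar embedded) graph: a finite vertex set,
a finite face set with a distinguished outer face, the underlying graph,
a vertex-face boundary incidence relation, and a face adjacency relation
(two faces sharing an edge). -/
structure PlaneGraph where
  verts : Finset ℕ
  faces : Finset ℕ
  outer : ℕ
  graph : SimpleGraph ℕ
  inc : ℕ → ℕ → Prop
  dualAdj : ℕ → ℕ → Prop
  outer_mem : outer ∈ faces

namespace PlaneGraph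

/-- A plane graph is outerplane if every vertex lies on the outer face. -/
def Outerplane (G : PlaneGraph) : Prop := ∀ v ∈ G.verts, G.inc v G.outer

/-- Biconnectivity: at least 3 vertices and removing any vertex leaves it connected. -/
def Biconnected (G : PlaneGraph) : Prop :=
  3 ≤ G.verts.card ∧
  ∀ v, (G.graph.induce {u | u ∈ G.verts ∧ u ≠ v}).Connected

/-- The dual graph of a plane graph, as a simple graph on the face names. -/
def dual (G : PlaneGraph) : SimpleGraph ℕ where
  Adj f g := f ≠ g ∧ f ∈ G.faces ∧ g ∈ G.faces ∧ (G.dualAdj f g ∨ G.dualAdj g f)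
  symm := by constructor; intro f g h; tauto
  loopless := by constructor; intro f h; tauto

/-- The face-vertex incidence graph, on `ℕ ⊕ ℕ` (left = vertices, right = faces). -/
def fvi (G : PlaneGraph) : SimpleGraph (ℕ ⊕ ℕ) where
  Adj x y :=
    (∃ v f, x = Sum.inl v ∧ y = Sum.inr f ∧ v ∈ G.verts ∧ f ∈ G.faces ∧ G.inc v f) ∨
    (∃ v f, y = Sum.inl v ∧ x = Sum.inr f ∧ v ∈ G.verts ∧ f ∈ G.faces ∧ G.inc v f)
  symm := by
    constructor
    rintro x y (⟨v, f, h1, h2, h3⟩ | ⟨v, f, h1, h2, h3⟩)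
    · exact Or.inr ⟨v, f, h1, h2, h3⟩
    · exact Or.inl ⟨v, f, h1, h2, h3⟩
  loopless := by
    constructor
    rintro x (⟨v, f, h1, h2, _⟩ | ⟨v, f, h1, h2, _⟩) <;> subst h1 <;> simp_all

/-- A face cover: a set of faces such that every vertex lies on some face of it. -/
def FaceCover (G : PlaneGraph) (S : Finset ℕ) : Prop :=
  S ⊆ G.faces ∧ ∀ v ∈ G.verts, ∃ f ∈ S, G.inc v f

/-- The vertex set `V(G) ∪ S` inside the face-vertex incidence graph. -/
def coverSet (G : PlaneGraph) (S : Finset ℕ) : Set (ℕ ⊕ ℕ) :=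
  {x | (∃ v ∈ G.verts, x = Sum.inl v) ∨ (∃ f ∈ S, x = Sum.inr f)}

/-- A connected face cover: the subgraph of the face-vertex incidence graph
induced by `S ∪ V(G)` is connected. -/
def ConnectedFaceCover (G : PlaneGraph) (S : Finset ℕ) : Prop :=
  G.FaceCover S ∧ ((G.fvi).induce (G.coverSet S)).Connected

/-- A feedback vertex set in the dual: removing these faces leaves the dual acyclic. -/
def FVS (G : PlaneGraph) (S : Finset ℕ) : Prop :=
  S ⊆ G.faces ∧ (G.dual.induce {f | f ∈ G.faces ∧ f ∉ S}).IsAcyclic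

/-- An embedding-preserving vertex split: a vertex `v` incident to two distinct
faces `f₁, f₂` is split into `v` and a fresh copy `v'`, merging `f₁` and `f₂`
into a new face `f`; everything else is preserved. -/
def IsSplit (G G' : PlaneGraph) : Prop :=
  ∃ v v' f₁ f₂ f, v ∈ G.verts ∧ v' ∉ G.verts ∧
    f₁ ∈ G.faces ∧ f₂ ∈ G.faces ∧ f₁ ≠ f₂ ∧ G.inc v f₁ ∧ G.inc v f₂ ∧
    f ∉ (G.faces.erase f₁).erase f₂ ∧
    G'.verts = insert v' G.verts ∧
    G'.faces = insert f ((G.faces.erase f₁).erase f₂) ∧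
    ((G.outer = f₁ ∨ G.outer = f₂) → G'.outer = f) ∧
    ((G.outer ≠ f₁ ∧ G.outer ≠ f₂) → G'.outer = G.outer) ∧
    (∀ u ∈ G.verts, ∀ g ∈ (G.faces.erase f₁).erase f₂, (G'.inc u g ↔ G.inc u g)) ∧
    (∀ u ∈ G.verts, (G'.inc u f ↔ (G.inc u f₁ ∨ G.inc u f₂))) ∧
    (∀ a b, a ∈ G.verts → b ∈ G.verts → a ≠ v → b ≠ v →
      (G'.graph.Adj a b ↔ G.graph.Adj a b)) ∧
    (∀ u, G.graph.Adj v u → (G'.graph.Adj v u ∨ G'.graph.Adj v' u))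

/-- `SplitSeq k G G'` : `G'` is obtained from `G` by `k` embedding-preserving splits. -/
def SplitSeq : ℕ → PlaneGraph → PlaneGraph → Prop
  | 0, G, G' => G = G'
  | k + 1, G, G' => ∃ H, IsSplit G H ∧ SplitSeq k H G'

/-- The outerplane splitting number: `k` is the least number of splits
turning `G` into an outerplane graph. -/
def OSN (G : PlaneGraph) (k : ℕ) : Prop :=
  IsLeast {m | ∃ G', SplitSeq m G G' ∧ G'.Outerplane} k

/-- A maximal planar graph (plane triangulation): biconnected, all faces
triangles, and exactly `2n - 4` faces. -/
def MaximalPlanar (G : PlaneGraph) : Prop :=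
  G.Biconnected ∧ (∀ f ∈ G.faces, {v | v ∈ G.verts ∧ G.inc v f}.ncard = 3) ∧
  G.faces.card = 2 * G.verts.card - 4

/-- Minimum degree at least `d`. -/
def minDegreeGE (G : PlaneGraph) (d : ℕ) : Prop :=
  ∀ v ∈ G.verts, d ≤ {u | G.graph.Adj v u}.ncard

/-- Cubic: every vertex has degree exactly 3. -/
def Cubic (G : PlaneGraph) : Prop :=
  ∀ v ∈ G.verts, {u | G.graph.Adj v u}.ncard = 3

def VertexCover (G : PlaneGraph) (C : Finset ℕ) : Prop :=
  C ⊆ G.verts ∧ ∀ u v, G.graph.Adj u v → u ∈ C ∨ v ∈ C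

/-- `D` is a plane embedding of the dual of `G`: its vertices are the faces of
`G`, its faces are the vertices of `G`, its adjacency is dual adjacency, and the
face of `D` for a vertex `v` of `G` is bounded by exactly the faces of `G` containing `v`. -/
def IsDual (G D : PlaneGraph) : Prop :=
  D.verts = G.faces ∧ D.faces = G.verts ∧
  (∀ f g, D.graph.Adj f g ↔ G.dual.Adj f g) ∧
  (∀ f v, D.inc f v ↔ (v ∈ G.verts ∧ f ∈ G.faces ∧ G.inc v f))

/-- `G'` is the all-1-subdivision of `G`: each edge `uv` is replaced by a path
through a fresh vertex `sub u v`; faces are unchanged, each subdivision vertex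
lies on exactly two faces, both of which contain both original endpoints. -/
def AllOneSub (G G' : PlaneGraph) : Prop :=
  ∃ sub : ℕ → ℕ → ℕ,
    (∀ u v, sub u v = sub v u) ∧
    (∀ u v, G.graph.Adj u v → sub u v ∉ G.verts) ∧
    (∀ u v a b, G.graph.Adj u v → G.graph.Adj a b → sub u v = sub a b →
      ((u = a ∧ v = b) ∨ (u = b ∧ v = a))) ∧
    (∀ x, x ∈ G'.verts ↔ (x ∈ G.verts ∨ ∃ u v, G.graph.Adj u v ∧ x = sub u v)) ∧
    (∀ x y, G'.graph.Adj x y ↔ ∃ u v, G.graph.Adj u v ∧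
      ((x = u ∧ y = sub u v) ∨ (y = u ∧ x = sub u v))) ∧
    G'.faces = G.faces ∧ G'.outer = G.outer ∧
    (∀ u ∈ G.verts, ∀ f, (G'.inc u f ↔ G.inc u f)) ∧
    (∀ u v, G.graph.Adj u v → ∀ f, G'.inc (sub u v) f →
      (f ∈ G.faces ∧ G.inc u f ∧ G.inc v f)) ∧
    (∀ u v, G.graph.Adj u v → {f | f ∈ G.faces ∧ G'.inc (sub u v) f}.ncard = 2)

/-- The plane `K₄`. -/
def IsK4Plane (G : PlaneGraph) : Prop :=
  G.verts.card = 4 ∧ G.faces.card = 4 ∧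
  (∀ u ∈ G.verts, ∀ v ∈ G.verts, u ≠ v → G.graph.Adj u v) ∧
  (∀ f ∈ G.faces, {v | v ∈ G.verts ∧ G.inc v f}.ncard = 3)

/-- `G` is obtained from `H` by inserting a new vertex `nv f` inside every inner
face `f` of `H`, joining it to the three boundary vertices and replacing `f`
by the three faces `nf f`. -/
def StellateAll (H G : PlaneGraph) : Prop :=
  ∃ (nv : ℕ → ℕ) (nf : ℕ → Finset ℕ),
    Set.InjOn nv ↑(H.faces.erase H.outer) ∧
    (∀ f ∈ H.faces.erase H.outer, nv f ∉ H.verts) ∧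
    G.verts = H.verts ∪ (H.faces.erase H.outer).image nv ∧
    (∀ f ∈ H.faces.erase H.outer, (nf f).card = 3) ∧
    (∀ f ∈ H.faces.erase H.outer, ∀ g ∈ H.faces.erase H.outer, f ≠ g →
      Disjoint (nf f) (nf g)) ∧
    (∀ f ∈ H.faces.erase H.outer, H.outer ∉ nf f) ∧
    G.faces = insert H.outer ((H.faces.erase H.outer).biUnion nf) ∧
    G.outer = H.outer ∧
    (∀ v, G.inc v G.outer ↔ (v ∈ H.verts ∧ H.inc v H.outer)) ∧
    (∀ f ∈ H.faces.erase H.outer, ∀ g ∈ nf f,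
      (G.inc (nv f) g ∧ ∀ v, G.inc v g → (v = nv f ∨ (v ∈ H.verts ∧ H.inc v f)))) ∧
    (∀ f ∈ H.faces.erase H.outer, ∀ v ∈ H.verts, H.inc v f → ∃ g ∈ nf f, G.inc v g) ∧
    (∀ f ∈ H.faces.erase H.outer, ∀ g, G.inc (nv f) g → g ∈ nf f) ∧
    (∀ f ∈ H.faces.erase H.outer, ∀ u, (G.graph.Adj (nv f) u ↔ (u ∈ H.verts ∧ H.inc u f))) ∧
    (∀ a b, a ∈ H.verts → b ∈ H.verts → (G.graph.Adj a b ↔ H.graph.Adj a b))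

/-- The complete planar 3-tree of depth `d`. -/
def IsCP3Tree : ℕ → PlaneGraph → Prop
  | 0, G => IsK4Plane G
  | d + 1, G => ∃ H, IsCP3Tree d H ∧ StellateAll H G

end PlaneGraph

namespace PlaneGraph

/-- Number of inner faces of `T_d` is `3^(d+1)`. -/
lemma cp3_inner_card : ∀ d (G : PlaneGraph), IsCP3Tree d G →
    (G.faces.erase G.outer).card = 3 ^ (d + 1) := by
  intro d
  induction d with
  | zero =>
    intro G hG
    obtain ⟨-, hf, -, -⟩ := hG
    rw [Finset.card_erase_of_mem G.outer_mem, hf]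
    norm_num
  | succ d ih =>
    intro G hG
    obtain ⟨H, hH, nv, nf, hinj, hnvnot, hverts, hcard3, hdisj, houter_not,
      hfaces, houter, _⟩ := hG
    have hE := ih H hH
    have hnotmem : H.outer ∉ (H.faces.erase H.outer).biUnion nf := by
      intro hmem
      obtain ⟨f, hf, hg⟩ := Finset.mem_biUnion.mp hmem
      exact houter_not f hf hg
    rw [hfaces, houter, Finset.erase_insert hnotmem,
      Finset.card_biUnion (fun f hf g hg hfg => hdisj f hf g hg hfg),
      Finset.sum_congr rfl (fun f hf => hcard3 f hf), Finset.sum_const, hE]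
    ring

/-- Vertex count of `T_d`: `2 n_d = 3^(d+1) + 5`. -/
lemma cp3_vert_card : ∀ d (G : PlaneGraph), IsCP3Tree d G →
    2 * G.verts.card = 3 ^ (d + 1) + 5 := by
  intro d
  induction d with
  | zero =>
    intro G hG
    obtain ⟨hv, -⟩ := hG
    rw [hv]
    norm_num
  | succ d ih =>
    intro G hG
    obtain ⟨H, hH, nv, nf, hinj, hnvnot, hverts, _⟩ := hG
    have hHcard := ih H hH
    have hE := cp3_inner_card d H hH
    have hdisj : Disjoint H.verts ((H.faces.erase H.outer).image nv) := by
      rw [Finset.disjoint_right]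
      intro x hx
      obtain ⟨f, hf, rfl⟩ := Finset.mem_image.mp hx
      exact hnvnot f hf
    have himg : ((H.faces.erase H.outer).image nv).card =
        (H.faces.erase H.outer).card := Finset.card_image_of_injOn hinj
    rw [hverts, Finset.card_union_of_disjoint hdisj, himg, hE]
    omega

/-- Any face cover of `T_d` has at least `3^d` faces. -/
lemma cp3_cover_lb (d : ℕ) (G : PlaneGraph) (hG : IsCP3Tree d G)
    (S : Finset ℕ) (hS : G.FaceCover S) : 3 ^ d ≤ S.card := by
  cases d with
  | zero =>
    obtain ⟨hv, -⟩ := hG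
    have : G.verts.Nonempty := Finset.card_pos.mp (by rw [hv]; norm_num)
    obtain ⟨v, hvmem⟩ := this
    obtain ⟨f, hfS, -⟩ := hS.2 v hvmem
    simpa using Finset.card_pos.mpr ⟨f, hfS⟩
  | succ d =>
    obtain ⟨H, hH, nv, nf, hinj, hnvnot, hverts, hcard3, hdisj, houter_not,
      hfaces, houter, hincout, hnfinc, hvinc, hnvonly, _⟩ := hG
    have hE := cp3_inner_card d H hH
    rw [← hE]
    -- for each inner face f, the vertex nv f must be covered, by a face in nf f
    have hmap : ∀ f : ℕ, ∃ g, f ∈ H.faces.erase H.outer → g ∈ S ∧ g ∈ nf f := by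
      intro f
      by_cases hf : f ∈ H.faces.erase H.outer
      · have hv : nv f ∈ G.verts := by
          rw [hverts]
          exact Finset.mem_union_right _ (Finset.mem_image_of_mem nv hf)
        obtain ⟨g, hgS, hginc⟩ := hS.2 (nv f) hv
        exact ⟨g, fun _ => ⟨hgS, hnvonly f hf g hginc⟩⟩
      · exact ⟨0, fun h => absurd h hf⟩
    choose φ hφ using hmap
    apply Finset.card_le_card_of_injOn φ
    · intro f hf; exact (hφ f hf).1
    · intro f hf g hg hfg
      by_contra hne
      have h1 : φ f ∈ nf f := (hφ f hf).2
      have h2 : φ g ∈ nf g := (hφ g hg).2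
      have := hdisj f hf g hg hne
      rw [hfg] at h1
      exact Finset.disjoint_left.mp this h1 h2

/-- If `m` splits turn `G` outerplane, `G` has a face cover of size `≤ m + 1`. -/
lemma split_cover : ∀ m (G G' : PlaneGraph), SplitSeq m G G' → G'.Outerplane →
    ∃ S : Finset ℕ, G.FaceCover S ∧ S.card ≤ m + 1 := by
  intro m
  induction m with
  | zero =>
    intro G G' hseq hout
    cases hseq
    refine ⟨{G.outer}, ⟨?_, ?_⟩, by simp⟩
    · simpa using G.outer_mem
    · intro v hv
      exact ⟨G.outer, Finset.mem_singleton_self _, hout v hv⟩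
  | succ m ih =>
    intro G G' hseq hout
    obtain ⟨H, hsplit, hseq'⟩ := hseq
    obtain ⟨S', ⟨hS'sub, hS'cov⟩, hS'card⟩ := ih H G' hseq' hout
    obtain ⟨v, v', f₁, f₂, f, hv, hv', hf₁, hf₂, hne, hif₁, hif₂, hfnot,
      hHverts, hHfaces, _, _, hincold, hincnew, _⟩ := hsplit
    by_cases hfS : f ∈ S'
    · refine ⟨insert f₁ (insert f₂ (S'.erase f)), ⟨?_, ?_⟩, ?_⟩
      · intro g hg
        rcases Finset.mem_insert.mp hg with rfl | hg
        · exact hf₁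
        rcases Finset.mem_insert.mp hg with rfl | hg
        · exact hf₂
        · have hg1 : g ∈ S' := Finset.mem_of_mem_erase hg
          have hg2 : g ≠ f := Finset.ne_of_mem_erase hg
          have := hS'sub hg1
          rw [hHfaces] at this
          rcases Finset.mem_insert.mp this with rfl | h
          · exact absurd rfl hg2
          · exact Finset.mem_of_mem_erase (Finset.mem_of_mem_erase h)
      · intro u hu
        have huH : u ∈ H.verts := by rw [hHverts]; exact Finset.mem_insert_of_mem hu
        obtain ⟨g, hgS, hginc⟩ := hS'cov u huH
        by_cases hgf : g = f
        · subst hgf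
          rcases (hincnew u hu).mp hginc with h | h
          · exact ⟨f₁, Finset.mem_insert_self _ _, h⟩
          · exact ⟨f₂, Finset.mem_insert_of_mem (Finset.mem_insert_self _ _), h⟩
        · have hgG : g ∈ (G.faces.erase f₁).erase f₂ := by
            have := hS'sub hgS
            rw [hHfaces] at this
            rcases Finset.mem_insert.mp this with rfl | h
            · exact absurd rfl hgf
            · exact h
          refine ⟨g, ?_, (hincold u hu g hgG).mp hginc⟩
          exact Finset.mem_insert_of_mem (Finset.mem_insert_of_mem
            (Finset.mem_erase.mpr ⟨hgf, hgS⟩))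
      · calc (insert f₁ (insert f₂ (S'.erase f))).card
            ≤ (insert f₂ (S'.erase f)).card + 1 := Finset.card_insert_le _ _
          _ ≤ (S'.erase f).card + 1 + 1 := by
              have := Finset.card_insert_le f₂ (S'.erase f); omega
          _ = S'.card - 1 + 1 + 1 := by rw [Finset.card_erase_of_mem hfS]
          _ ≤ m + 1 + 1 := by
              have : 1 ≤ S'.card := Finset.card_pos.mpr ⟨f, hfS⟩
              omega
    · refine ⟨S', ⟨?_, ?_⟩, by omega⟩
      · intro g hg
        have := hS'sub hg
        rw [hHfaces] at this
        rcases Finset.mem_insert.mp this with rfl | h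
        · exact absurd hg hfS
        · exact Finset.mem_of_mem_erase (Finset.mem_of_mem_erase h)
      · intro u hu
        have huH : u ∈ H.verts := by rw [hHverts]; exact Finset.mem_insert_of_mem hu
        obtain ⟨g, hgS, hginc⟩ := hS'cov u huH
        have hgG : g ∈ (G.faces.erase f₁).erase f₂ := by
          have := hS'sub hgS
          rw [hHfaces] at this
          rcases Finset.mem_insert.mp this with rfl | h
          · exact absurd hgS hfS
          · exact h
        exact ⟨g, hgS, (hincold u hu g hgG).mp hginc⟩

end PlaneGraph

/-- The complete planar 3-tree `T_d` has outerplane splitting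
number at least `(2 n_d - 8)/3` where `n_d = |V(T_d)|`. -/
theorem stmt_16 (d : ℕ) (G : PlaneGraph) (hG : PlaneGraph.IsCP3Tree d G)
    (k : ℕ) (hk : G.OSN k) :
    (2 * (G.verts.card : ℚ) - 8) / 3 ≤ (k : ℚ) := by
  obtain ⟨⟨G', hseq, hout⟩, -⟩ := hk
  obtain ⟨S, hcov, hcard⟩ := PlaneGraph.split_cover k G G' hseq hout
  have hlb : 3 ^ d ≤ S.card := PlaneGraph.cp3_cover_lb d G hG S hcov
  have hvc : 2 * G.verts.card = 3 ^ (d + 1) + 5 := PlaneGraph.cp3_vert_card d G hG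
  have h1 : 3 ^ d ≤ k + 1 := le_trans hlb hcard
  have hq1 : ((3 : ℚ)) ^ d ≤ (k : ℚ) + 1 := by exact_mod_cast h1
  have hq2 : 2 * (G.verts.card : ℚ) = 3 * 3 ^ d + 5 := by
    have : ((2 * G.verts.card : ℕ) : ℚ) = ((3 ^ (d + 1) + 5 : ℕ) : ℚ) :=
      congrArg _ hvc
    push_cast [pow_succ] at this
    linarith
  rw [div_le_iff₀ (by norm_num : (0:ℚ) < 3)]
  linarith
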